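/- arXiv:2205.14613 — 2 statements merged into one kernel-verified Lean document; each statement's English description precedes it below -/
import Mathlib

section
/- Self-concordance of the logistic function: for h(x) = log(1 + exp(x)), the third derivative satisfies |h'''(x)| ≤ h''(x) for all real x. -/
open Real

lemma logistic_d1 : deriv (fun x => Real.log (1 + Real.exp x)) =
    fun x => Real.exp x / (1 + Real.exp x) := by
  funext x
  have hpos : (0:ℝ) < 1 + Real.exp x := by positivity
  exact (((hasDerivAt_exp x).const_add 1).log hpos.ne').deriv

lemma logistic_d2 : deriv (fun x => Real.exp x / (1 + Real.exp x)) =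
    fun x => Real.exp x / (1 + Real.exp x) ^ 2 := by
  funext x
  have hpos : (0:ℝ) < 1 + Real.exp x := by positivity
  have h := ((hasDerivAt_exp x).div ((hasDerivAt_exp x).const_add 1) hpos.ne').deriv
  rw [show (fun x => Real.exp x / (1 + Real.exp x)) =
    (Real.exp / fun x => 1 + Real.exp x) from rfl, h]
  field_simp
  ring

lemma logistic_d3 : deriv (fun x => Real.exp x / (1 + Real.exp x) ^ 2) =
    fun x => Real.exp x * (1 - Real.exp x) / (1 + Real.exp x) ^ 3 := by
  funext x
  have hpos : (0:ℝ) < 1 + Real.exp x := by positivity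
  have hpos2 : (0:ℝ) < (1 + Real.exp x) ^ 2 := by positivity
  have h := ((hasDerivAt_exp x).div (((hasDerivAt_exp x).const_add 1).pow 2)
    hpos2.ne').deriv
  rw [show (fun x => Real.exp x / (1 + Real.exp x) ^ 2) =
    (Real.exp / (fun x => 1 + Real.exp x) ^ 2) from rfl, h]
  simp only [Pi.pow_apply]
  field_simp
  ring

/-- Self-concordance of the logistic function: for `h(x) = log(1 + exp x)`,
the third derivative satisfies `|h'''(x)| ≤ h''(x)` for all real `x`. -/
theorem logistic_self_concordant (h : ℝ → ℝ)
    (hh : ∀ x, h x = Real.log (1 + Real.exp x)) :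
    ∀ x : ℝ, |iteratedDeriv 3 h x| ≤ iteratedDeriv 2 h x := by
  have hfun : h = fun x => Real.log (1 + Real.exp x) := funext hh
  intro x
  rw [hfun, show (3:ℕ) = 2 + 1 from rfl, iteratedDeriv_succ, iteratedDeriv_succ,
    iteratedDeriv_succ, iteratedDeriv_zero,
    logistic_d1, logistic_d2, logistic_d3]
  have he : (0:ℝ) < Real.exp x := Real.exp_pos x
  have hpos : (0:ℝ) < 1 + Real.exp x := by positivity
  rw [abs_div, abs_of_pos (by positivity : (0:ℝ) < (1 + Real.exp x) ^ 3), abs_mul,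
    abs_of_pos he]
  rw [div_le_div_iff₀ (by positivity) (by positivity)]
  have habs : |1 - Real.exp x| ≤ 1 + Real.exp x := by
    rw [abs_le]; constructor <;> nlinarith
  nlinarith [mul_le_mul_of_nonneg_left habs he.le, sq_nonneg (1 + Real.exp x),
    mul_pos he (mul_pos hpos hpos)]
end

section
/- Deterministic Benjamini–Yekutieli-type bound: let p ≥ 1, α ∈ (0,1), and set ᾱ = α/(p·Σ_{i=1}^p 1/i). Suppose random p-values p̂₁,…,p̂_p satisfy P(p̂_i ≤ t) ≤ t for every i in a null set N ⊆ {1,…,p} and every t ∈ [0,1]. Define the selected set Ŝ via the BY rule: k̂ = max{k : p̂_{(k)} ≤ k·ᾱ} (with Ŝ = ∅ if no such k exists) and Ŝ = {j : p̂_j ≤ p̂_{(k̂)}}. Then E[card(Ŝ ∩ N)/max(card(Ŝ),1)] ≤ card(N)·(Σ_{j=1}^p 1/j)·ᾱ ≤ α. -/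
open MeasureTheory Classical

noncomputable def byc (p j : ℕ) : ℝ := if j = p then 1 / p else 1 / j - 1 / (j + 1)

lemma byc_nonneg (p j : ℕ) (hj : 1 ≤ j) : 0 ≤ byc p j := by
  unfold byc
  split
  · positivity
  · have h1 : (1:ℝ) ≤ (j:ℝ) := by exact_mod_cast hj
    rw [sub_nonneg]
    apply one_div_le_one_div_of_le (by linarith)
    linarith

lemma byc_tail (p : ℕ) : ∀ d k, 1 ≤ k → k + d = p →
    ∑ j ∈ Finset.Icc k p, byc p j = 1 / k := by
  intro d
  induction d with
  | zero =>
    intro k hk hkp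
    have : k = p := by omega
    subst this
    simp [byc]
  | succ d ih =>
    intro k hk hkp
    have hklt : k < p := by omega
    have hins : Finset.Icc k p = insert k (Finset.Icc (k+1) p) := by
      ext x; simp only [Finset.mem_Icc, Finset.mem_insert]; omega
    rw [hins, Finset.sum_insert (by simp only [Finset.mem_Icc]; omega),
      ih (k+1) (by omega) (by omega)]
    have hkne : k ≠ p := by omega
    unfold byc
    rw [if_neg hkne]
    have hk0 : (k:ℝ) ≥ 1 := by exact_mod_cast hk
    push_cast
    ring

lemma byc_dot (p : ℕ) :
    ∑ j ∈ Finset.Icc 1 p, byc p j * j = ∑ j ∈ Finset.Icc 1 p, 1 / (j:ℝ) := by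
  have lhs : ∀ j ∈ Finset.Icc 1 p, byc p j * j = ∑ _k ∈ Finset.Icc 1 j, byc p j := by
    intro j hj
    rw [Finset.sum_const, Nat.card_Icc, nsmul_eq_mul]
    push_cast [Nat.add_sub_cancel]
    ring
  rw [Finset.sum_congr rfl lhs]
  have h1 : ∀ j ∈ Finset.Icc 1 p, ∑ _k ∈ Finset.Icc 1 j, byc p j
      = ∑ k ∈ Finset.Icc 1 p, if k ≤ j then byc p j else 0 := by
    intro j hj
    rw [← Finset.sum_filter]
    congr 1
    ext x
    simp only [Finset.mem_Icc, Finset.mem_filter]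
    have := (Finset.mem_Icc.mp hj).2
    omega
  rw [Finset.sum_congr rfl h1, Finset.sum_comm]
  apply Finset.sum_congr rfl
  intro k hk
  have hk1 : 1 ≤ k := (Finset.mem_Icc.mp hk).1
  have hkp : k ≤ p := (Finset.mem_Icc.mp hk).2
  have h2 : ∑ j ∈ Finset.Icc 1 p, (if k ≤ j then byc p j else 0)
      = ∑ j ∈ Finset.Icc k p, byc p j := by
    rw [← Finset.sum_filter]
    congr 1
    ext x
    simp only [Finset.mem_Icc, Finset.mem_filter]
    omega
  rw [h2, byc_tail p (p - k) k hk1 (by omega)]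

lemma byc_key (p k : ℕ) (hk1 : 1 ≤ k) (hkp : k ≤ p) (abar x : ℝ) (habar : 0 ≤ abar)
    (hx : x ≤ k * abar) :
    1 / (k:ℝ) ≤ ∑ j ∈ Finset.Icc 1 p, byc p j * (if x ≤ j * abar then 1 else 0) := by
  have h2 : ∑ j ∈ Finset.Icc k p, byc p j * (if x ≤ j * abar then 1 else 0)
      = ∑ j ∈ Finset.Icc k p, byc p j := by
    apply Finset.sum_congr rfl
    intro j hj
    have hkj : (k:ℝ) ≤ (j:ℝ) := by exact_mod_cast (Finset.mem_Icc.mp hj).1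
    have : x ≤ j * abar := le_trans hx (by nlinarith)
    rw [if_pos this, mul_one]
  calc 1 / (k:ℝ) = ∑ j ∈ Finset.Icc k p, byc p j := (byc_tail p (p - k) k hk1 (by omega)).symm
    _ = ∑ j ∈ Finset.Icc k p, byc p j * (if x ≤ j * abar then 1 else 0) := h2.symm
    _ ≤ ∑ j ∈ Finset.Icc 1 p, byc p j * (if x ≤ j * abar then 1 else 0) := by
        apply Finset.sum_le_sum_of_subset_of_nonneg
        · apply Finset.Icc_subset_Icc_left hk1
        · intro j hj _
          have hj1 : 1 ≤ j := (Finset.mem_Icc.mp hj).1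
          have := byc_nonneg p j hj1
          positivity

/-- Deterministic Benjamini–Yekutieli-type FDR bound: with `p ≥ 1`,
`α ∈ (0,1)`, `ᾱ = α/(p Σ_{i=1}^p 1/i)`, super-uniform null p-values
(`P(p̂_i ≤ t) ≤ t` for `i ∈ N`, `t ∈ [0,1]`), and the BY selection rule
(`k̂ = max{k : p̂_{(k)} ≤ kᾱ}`, `Ŝ = {j : p̂_j ≤ p̂_{(k̂)}}`, `Ŝ = ∅` if no such
`k` exists), the expected false discovery proportion over `N` satisfies
`E[card(Ŝ ∩ N)/max(card Ŝ, 1)] ≤ card(N)(Σ_{j=1}^p 1/j)ᾱ ≤ α`. -/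
theorem by_fdr_bound {Ω : Type*} [MeasurableSpace Ω]
    (μ : Measure Ω) [IsProbabilityMeasure μ]
    (p : ℕ) (hp : 1 ≤ p) (α : ℝ) (hα : α ∈ Set.Ioo (0 : ℝ) 1)
    (abar : ℝ)
    (habar : abar = α / (p * ∑ i ∈ Finset.Icc 1 p, (1 : ℝ) / i))
    (phat : Fin p → Ω → ℝ) (hmeas : ∀ j, Measurable (phat j))
    (hrange : ∀ j ω, phat j ω ∈ Set.Icc (0 : ℝ) 1)
    (N : Finset (Fin p))
    (hnull : ∀ i ∈ N, ∀ t ∈ Set.Icc (0 : ℝ) 1,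
      μ {ω | phat i ω ≤ t} ≤ ENNReal.ofReal t)
    (sVal : Ω → ℕ → ℝ)
    (hsVal : ∀ ω k, sVal ω k =
      sInf {c : ℝ | k ≤ (Finset.univ.filter fun j => phat j ω ≤ c).card})
    (K : Ω → Set ℕ)
    (hK : ∀ ω, K ω = {k | k ∈ Finset.Icc 1 p ∧ sVal ω k ≤ k * abar})
    (khat : Ω → ℕ) (hkhat : ∀ ω, khat ω = sSup (K ω))
    (Shat : Ω → Finset (Fin p))
    (hShat : ∀ ω, Shat ω =
      if (K ω).Nonempty then
        Finset.univ.filter fun j => phat j ω ≤ sVal ω (khat ω)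
      else ∅) :
    (∫ ω, (((Shat ω ∩ N).card : ℝ) / (max (Shat ω).card 1 : ℕ)) ∂μ) ≤
        N.card * (∑ j ∈ Finset.Icc 1 p, (1 : ℝ) / j) * abar ∧
      N.card * (∑ j ∈ Finset.Icc 1 p, (1 : ℝ) / j) * abar ≤ α := by
  obtain ⟨hα0, hα1⟩ := hα
  set Ssum : ℝ := ∑ i ∈ Finset.Icc 1 p, (1 : ℝ) / i with hSsum
  have hSsum1 : (1:ℝ) ≤ Ssum := by
    have h1 : (1:ℕ) ∈ Finset.Icc 1 p := by simp [Finset.mem_Icc]; omega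
    calc (1:ℝ) = 1 / ((1:ℕ):ℝ) := by norm_num
      _ ≤ Ssum := Finset.single_le_sum (f := fun i : ℕ => 1 / (i:ℝ))
          (fun i _ => by positivity) h1
  have hSsumpos : (0:ℝ) < Ssum := by linarith
  have hp0 : (0:ℝ) < (p:ℝ) := by exact_mod_cast hp
  have habar0 : 0 < abar := by rw [habar]; positivity
  have hpabar : (p:ℝ) * abar ≤ α := by
    rw [habar]
    rw [show (p:ℝ) * (α / (p * Ssum)) = α / Ssum by field_simp]
    rw [div_le_iff₀ hSsumpos]
    nlinarith
  have hcardN : ((N.card : ℕ):ℝ) ≤ (p:ℝ) := by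
    have h := Finset.card_le_univ N
    simp only [Finset.card_univ, Fintype.card_fin] at h
    exact_mod_cast h
  have part2 : (N.card:ℝ) * Ssum * abar ≤ α := by
    have h1 : (N.card:ℝ) * Ssum * abar ≤ (p:ℝ) * Ssum * abar := by
      apply mul_le_mul_of_nonneg_right _ habar0.le
      exact mul_le_mul_of_nonneg_right hcardN hSsumpos.le
    have h2 : (p:ℝ) * Ssum * abar = α := by
      rw [habar]
      field_simp
    linarith
  refine ⟨?_, part2⟩
  -- the dominating function
  set g : Ω → ℝ := fun ω => ∑ i ∈ N, ∑ j ∈ Finset.Icc 1 p,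
      byc p j * (if phat i ω ≤ (j:ℝ) * abar then (1:ℝ) else 0) with hg
  have hg0 : ∀ ω, 0 ≤ g ω := by
    intro ω
    apply Finset.sum_nonneg
    intro i _
    apply Finset.sum_nonneg
    intro j hj
    have := byc_nonneg p j (Finset.mem_Icc.mp hj).1
    positivity
  -- pointwise bound
  have hptw : ∀ ω, ((Shat ω ∩ N).card : ℝ) / ((max (Shat ω).card 1 : ℕ):ℝ) ≤ g ω := by
    intro ω
    by_cases hne : (K ω).Nonempty
    · -- selection nonempty
      have hbdd : BddAbove (K ω) := by
        refine ⟨p, fun x hx => ?_⟩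
        rw [hK] at hx
        exact (Finset.mem_Icc.mp hx.1).2
      have hks : khat ω ∈ K ω := by
        rw [hkhat]
        exact Nat.sSup_mem hne hbdd
      rw [hK] at hks
      obtain ⟨hkI, hsv⟩ := hks
      set k := khat ω with hkdef
      obtain ⟨hk1, hkp⟩ := Finset.mem_Icc.mp hkI
      -- at least k p-values below the threshold
      have hcard : k ≤ (Finset.univ.filter fun j => phat j ω ≤ sVal ω k).card := by
        by_contra hlt
        push_neg at hlt
        have hS1 : (1:ℝ) ∈ {c : ℝ | k ≤ (Finset.univ.filter fun j => phat j ω ≤ c).card} := by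
          have heq : (Finset.univ.filter fun j : Fin p => phat j ω ≤ (1:ℝ)) = Finset.univ := by
            apply Finset.filter_true_of_mem
            intro x _
            exact (hrange x ω).2
          simp only [Set.mem_setOf_eq, heq]
          simpa using hkp
        have hGne : (Finset.univ.filter fun j : Fin p => ¬ phat j ω ≤ sVal ω k).Nonempty := by
          rw [Finset.filter_nonempty_iff]
          by_contra hempty
          push_neg at hempty
          have : (Finset.univ.filter fun j : Fin p => phat j ω ≤ sVal ω k) = Finset.univ := by
            apply Finset.filter_true_of_mem
            intro x _
            exact hempty x (Finset.mem_univ x)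
          rw [this] at hlt
          simp at hlt
          omega
        obtain ⟨m, hm, hmin⟩ := Finset.exists_min_image _ (fun j => phat j ω) hGne
        have hmG : ¬ phat m ω ≤ sVal ω k := (Finset.mem_filter.mp hm).2
        have hinf : sInf {c : ℝ | k ≤ (Finset.univ.filter fun j => phat j ω ≤ c).card}
            < phat m ω := by
          rw [← hsVal ω k]
          linarith [not_le.mp hmG]
        obtain ⟨c, hcS, hc⟩ := exists_lt_of_csInf_lt ⟨1, hS1⟩ hinf
        have hsub : (Finset.univ.filter fun j : Fin p => phat j ω ≤ c)
            ⊆ (Finset.univ.filter fun j : Fin p => phat j ω ≤ sVal ω k) := by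
          intro j hj
          simp only [Finset.mem_filter, Finset.mem_univ, true_and] at hj ⊢
          by_contra hjF
          have hjG : j ∈ Finset.univ.filter fun j : Fin p => ¬ phat j ω ≤ sVal ω k := by
            simp only [Finset.mem_filter, Finset.mem_univ, true_and]
            exact hjF
          have := hmin j hjG
          linarith
        have hle := Finset.card_le_card hsub
        have hck : k ≤ (Finset.univ.filter fun j : Fin p => phat j ω ≤ c).card := hcS
        omega
      have hSh : Shat ω = Finset.univ.filter fun j => phat j ω ≤ sVal ω k := by
        rw [hShat, if_pos hne]
      have hkcard : k ≤ (Shat ω).card := by rw [hSh]; exact hcard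
      have hD : (k:ℝ) ≤ ((max (Shat ω).card 1 : ℕ):ℝ) := by
        exact_mod_cast le_trans hkcard (le_max_left _ _)
      have hk0 : (0:ℝ) < (k:ℝ) := by exact_mod_cast hk1
      have hnum : ((Shat ω ∩ N).card : ℝ) = ∑ i ∈ N, (if i ∈ Shat ω then (1:ℝ) else 0) := by
        rw [Finset.sum_boole]
        norm_cast
        rw [Finset.filter_mem_eq_inter, Finset.inter_comm]
      rw [hnum, Finset.sum_div, hg]
      apply Finset.sum_le_sum
      intro i hi
      by_cases hiS : i ∈ Shat ω
      · rw [if_pos hiS]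
        have hpi : phat i ω ≤ sVal ω k := by
          rw [hSh] at hiS
          exact (Finset.mem_filter.mp hiS).2
        have hx : phat i ω ≤ (k:ℝ) * abar := le_trans hpi hsv
        calc (1:ℝ) / ((max (Shat ω).card 1 : ℕ):ℝ) ≤ 1 / (k:ℝ) :=
              one_div_le_one_div_of_le hk0 hD
          _ ≤ _ := byc_key p k hk1 hkp abar (phat i ω) habar0.le hx
      · rw [if_neg hiS]
        rw [zero_div]
        apply Finset.sum_nonneg
        intro j hj
        have := byc_nonneg p j (Finset.mem_Icc.mp hj).1
        positivity
    · -- selection empty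
      have hSh : Shat ω = ∅ := by rw [hShat, if_neg hne]
      rw [hSh]
      simpa using hg0 ω
  -- integrability of g
  have hindeq : ∀ (i : Fin p) (j : ℕ),
      (fun ω => if phat i ω ≤ (j:ℝ) * abar then (1:ℝ) else 0)
        = Set.indicator (phat i ⁻¹' Set.Iic ((j:ℝ)*abar)) (fun _ => (1:ℝ)) := by
    intro i j
    ext ω
    simp [Set.indicator_apply]
  have hmeasA : ∀ (i : Fin p) (j : ℕ), MeasurableSet (phat i ⁻¹' Set.Iic ((j:ℝ)*abar)) :=
    fun i j => (hmeas i) measurableSet_Iic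
  have hint : ∀ (i : Fin p) (j : ℕ),
      Integrable (fun ω => byc p j * (if phat i ω ≤ (j:ℝ)*abar then (1:ℝ) else 0)) μ := by
    intro i j
    apply Integrable.const_mul
    rw [hindeq i j]
    exact (integrable_const (1:ℝ)).indicator (hmeasA i j)
  have hgint : Integrable g μ := by
    rw [hg]
    apply integrable_finset_sum
    intro i _
    exact integrable_finset_sum _ (fun j _ => hint i j)
  have hmono : (∫ ω, (((Shat ω ∩ N).card : ℝ) / (max (Shat ω).card 1 : ℕ)) ∂μ)
      ≤ ∫ ω, g ω ∂μ := by
    apply integral_mono_of_nonneg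
    · exact Filter.Eventually.of_forall fun ω => div_nonneg (Nat.cast_nonneg _) (Nat.cast_nonneg _)
    · exact hgint
    · exact Filter.Eventually.of_forall hptw
  have hgval : ∫ ω, g ω ∂μ = ∑ i ∈ N, ∑ j ∈ Finset.Icc 1 p,
      byc p j * (μ (phat i ⁻¹' Set.Iic ((j:ℝ)*abar))).toReal := by
    rw [hg, integral_finset_sum _ (fun i _ => integrable_finset_sum _ (fun j _ => hint i j))]
    apply Finset.sum_congr rfl
    intro i _
    rw [integral_finset_sum _ (fun j _ => hint i j)]
    apply Finset.sum_congr rfl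
    intro j _
    rw [integral_const_mul]
    congr 1
    rw [hindeq i j, integral_indicator_const _ (hmeasA i j)]
    simp [measureReal_def]
  have hμle : ∀ i ∈ N, ∀ j ∈ Finset.Icc 1 p,
      (μ (phat i ⁻¹' Set.Iic ((j:ℝ)*abar))).toReal ≤ (j:ℝ)*abar := by
    intro i hi j hj
    obtain ⟨hj1, hjp⟩ := Finset.mem_Icc.mp hj
    have hjr : (j:ℝ) ≤ (p:ℝ) := by exact_mod_cast hjp
    have h0 : 0 ≤ (j:ℝ)*abar := by positivity
    have h1 : (j:ℝ)*abar ≤ 1 := by nlinarith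
    have hn := hnull i hi ((j:ℝ)*abar) ⟨h0, h1⟩
    have hset : phat i ⁻¹' Set.Iic ((j:ℝ)*abar) = {ω | phat i ω ≤ (j:ℝ)*abar} := rfl
    calc (μ (phat i ⁻¹' Set.Iic ((j:ℝ)*abar))).toReal
        ≤ (ENNReal.ofReal ((j:ℝ)*abar)).toReal :=
          ENNReal.toReal_mono ENNReal.ofReal_ne_top (hset ▸ hn)
      _ = (j:ℝ)*abar := ENNReal.toReal_ofReal h0
  calc (∫ ω, (((Shat ω ∩ N).card : ℝ) / (max (Shat ω).card 1 : ℕ)) ∂μ)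
      ≤ ∫ ω, g ω ∂μ := hmono
    _ = ∑ i ∈ N, ∑ j ∈ Finset.Icc 1 p,
        byc p j * (μ (phat i ⁻¹' Set.Iic ((j:ℝ)*abar))).toReal := hgval
    _ ≤ ∑ i ∈ N, ∑ j ∈ Finset.Icc 1 p, byc p j * ((j:ℝ)*abar) := by
        apply Finset.sum_le_sum
        intro i hi
        apply Finset.sum_le_sum
        intro j hj
        exact mul_le_mul_of_nonneg_left (hμle i hi j hj)
          (byc_nonneg p j (Finset.mem_Icc.mp hj).1)
    _ = (N.card:ℝ) * Ssum * abar := by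
        have hinner : ∑ j ∈ Finset.Icc 1 p, byc p j * ((j:ℝ)*abar) = Ssum * abar := by
          have h1 : ∑ j ∈ Finset.Icc 1 p, byc p j * ((j:ℝ)*abar)
              = (∑ j ∈ Finset.Icc 1 p, byc p j * (j:ℝ)) * abar := by
            rw [Finset.sum_mul]
            exact Finset.sum_congr rfl fun j _ => by ring
          rw [h1, byc_dot]
        rw [Finset.sum_const, nsmul_eq_mul, hinner]
        ring
end
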